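/- arXiv:2406.10693 — 3 statements merged into one kernel-verified Lean document; each statement's English description precedes it below -/
import Mathlib

section
/- Dilated-cube weak-limit vanishing: let φ ∈ L^2(R^d) and let g_n be unitary operators on L^2(R^d) of the form g_n f(ξ) = (h_n^1/h_n^2)^{d/2} f((h_n^1/h_n^2)ξ + c_n) with h_n^1, h_n^2 > 0 and c_n ∈ R^d. If h_n^1/h_n^2 + h_n^2/h_n^1 + |c_n| → ∞, then g_n φ ⇀ 0 weakly in L^2(R^d). -/
open MeasureTheory Metric Set
open scoped ENNReal

noncomputable section

namespace DilatedAux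

variable {d : ℕ}

local notation "E" => EuclideanSpace ℝ (Fin d)

lemma measurable_S (l : ℝ) (c : E) : Measurable (fun x : E => l • x + c) :=
  ((continuous_const_smul l).add continuous_const).measurable

lemma map_S {l : ℝ} (hl : l ≠ 0) (c : E) :
    Measure.map (fun x : E => l • x + c) (volume : Measure E)
      = ENNReal.ofReal |((l : ℝ) ^ d)⁻¹| • volume := by
  have h : (fun x : E => l • x + c) = (fun y : E => y + c) ∘ (fun x : E => l • x) := rfl
  rw [h, ← Measure.map_map (measurable_add_const c) (measurable_const_smul l),
    Measure.map_addHaar_smul (volume : Measure E) hl, Measure.map_smul,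
    (measurePreserving_add_right (volume : Measure E) c).map_eq, finrank_euclideanSpace_fin]

lemma qmp {l : ℝ} (hl : l ≠ 0) (c : E) :
    Measure.QuasiMeasurePreserving (fun x : E => l • x + c) volume volume :=
  ⟨measurable_S l c, by rw [map_S hl c]; exact Measure.smul_absolutelyContinuous⟩

lemma eLpNorm_T {l : ℝ} (hl : 0 < l) (c : E) {f : E → ℂ}
    (hf : AEStronglyMeasurable f (volume : Measure E)) :
    eLpNorm (fun ξ : E => ((l ^ ((d : ℝ) / 2) : ℝ) : ℂ) * f (l • ξ + c)) 2 volume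
      = eLpNorm f 2 volume := by
  have hmap := map_S (d := d) hl.ne' c
  have hf' : AEStronglyMeasurable f (Measure.map (fun x : E => l • x + c) volume) := by
    rw [hmap]; exact hf.mono_ac Measure.smul_absolutelyContinuous
  have h1 : (fun ξ : E => ((l ^ ((d : ℝ) / 2) : ℝ) : ℂ) * f (l • ξ + c))
      = ((l ^ ((d : ℝ) / 2) : ℝ) : ℂ) • (f ∘ (fun x : E => l • x + c)) := by
    ext ξ; simp [smul_eq_mul]
  rw [h1, eLpNorm_const_smul, ← eLpNorm_map_measure hf' (measurable_S l c).aemeasurable,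
    hmap, eLpNorm_smul_measure_of_ne_top (by norm_num : (2 : ℝ≥0∞) ≠ ∞), smul_eq_mul,
    ← mul_assoc]
  have hpos : (0 : ℝ) < l ^ ((d : ℝ) / 2) := Real.rpow_pos_of_pos hl _
  have h2 : (‖((l ^ ((d : ℝ) / 2) : ℝ) : ℂ)‖ₑ : ℝ≥0∞) = ENNReal.ofReal (l ^ ((d : ℝ) / 2)) := by
    rw [← ofReal_norm, Complex.norm_real, Real.norm_eq_abs, abs_of_pos hpos]
  have h3 : |((l : ℝ) ^ d)⁻¹| = l ^ (-(d : ℝ)) := by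
    rw [abs_of_pos (by positivity), ← Real.rpow_natCast l d, ← Real.rpow_neg hl.le]
  have h4 : ((1 / (2 : ℝ≥0∞)).toReal) = (2⁻¹ : ℝ) := by simp
  rw [h2, h3, h4, ENNReal.ofReal_rpow_of_pos (Real.rpow_pos_of_pos hl _),
    ← ENNReal.ofReal_mul hpos.le]
  have h5 : l ^ ((d : ℝ) / 2) * (l ^ (-(d : ℝ))) ^ (2⁻¹ : ℝ) = 1 := by
    rw [← Real.rpow_mul hl.le, ← Real.rpow_add hl,
      show (d:ℝ)/2 + -(d:ℝ) * 2⁻¹ = 0 by ring, Real.rpow_zero]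
  rw [h5, ENNReal.ofReal_one, one_mul]

lemma memLp_T {l : ℝ} (hl : 0 < l) (c : E) {f : E → ℂ}
    (hf : MemLp f 2 (volume : Measure E)) :
    MemLp (fun ξ : E => ((l ^ ((d : ℝ) / 2) : ℝ) : ℂ) * f (l • ξ + c)) 2 volume :=
  ⟨(hf.1.comp_quasiMeasurePreserving (qmp hl.ne' c)).const_mul _,
   by rw [eLpNorm_T hl c hf.1]; exact hf.2.trans_eq rfl⟩

lemma l2_integrable {f g : E → ℂ} (hf : MemLp f 2 (volume : Measure E))
    (hg : MemLp g 2 (volume : Measure E)) :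
    Integrable (fun x : E => f x * (starRingEnd ℂ) (g x)) volume := by
  have h := L2.integrable_inner (𝕜 := ℂ) (hg.toLp g) (hf.toLp f)
  refine h.congr ?_
  filter_upwards [hf.coeFn_toLp, hg.coeFn_toLp] with x h1 h2
  simp only [h1, h2, RCLike.inner_apply]

lemma l2_CS {f g : E → ℂ} (hf : MemLp f 2 (volume : Measure E))
    (hg : MemLp g 2 (volume : Measure E)) :
    ‖∫ x : E, f x * (starRingEnd ℂ) (g x)‖
      ≤ (eLpNorm f 2 volume).toReal * (eLpNorm g 2 volume).toReal := by
  have heq : ∫ x : E, f x * (starRingEnd ℂ) (g x)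
      = inner (𝕜 := ℂ) (hg.toLp g) (hf.toLp f) := by
    rw [L2.inner_def]
    refine (integral_congr_ae ?_).symm
    filter_upwards [hf.coeFn_toLp, hg.coeFn_toLp] with x h1 h2
    simp only [h1, h2, RCLike.inner_apply]
  rw [heq]
  calc ‖inner (𝕜 := ℂ) (hg.toLp g) (hf.toLp f)‖ ≤ ‖hg.toLp g‖ * ‖hf.toLp f‖ :=
        norm_inner_le_norm _ _
    _ = (eLpNorm f 2 volume).toReal * (eLpNorm g 2 volume).toReal := by
        rw [Lp.norm_toLp, Lp.norm_toLp]; ring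


lemma core_vanish {φ₀ ψ₀ : E → ℂ} {R : ℝ}
    (hsφ : ∀ x : E, R < ‖x‖ → φ₀ x = 0) (hsψ : ∀ x : E, R < ‖x‖ → ψ₀ x = 0)
    {l : ℝ} (hl : 0 < l) {c : E} (hc : R * (1 + l) < ‖c‖) :
    (∫ ξ : E, ((l ^ ((d : ℝ) / 2) : ℝ) : ℂ) * φ₀ (l • ξ + c) * (starRingEnd ℂ) (ψ₀ ξ)) = 0 := by
  have hz : ∀ ξ : E, ((l ^ ((d : ℝ) / 2) : ℝ) : ℂ) * φ₀ (l • ξ + c) * (starRingEnd ℂ) (ψ₀ ξ)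
      = 0 := by
    intro ξ
    by_cases hξ : ‖ξ‖ ≤ R
    · have h1 : ‖c‖ ≤ ‖l • ξ + c‖ + ‖l • ξ‖ := by
        have := norm_add_le (l • ξ + c) (-(l • ξ))
        simpa using this
      have h2 : ‖l • ξ‖ ≤ l * R := by
        rw [norm_smul, Real.norm_eq_abs, abs_of_pos hl]
        exact mul_le_mul_of_nonneg_left hξ hl.le
      have h3 : R < ‖l • ξ + c‖ := by nlinarith
      rw [hsφ _ h3, mul_zero, zero_mul]
    · rw [hsψ _ (lt_of_not_ge hξ), map_zero, mul_zero]
  rw [show (fun ξ : E => ((l ^ ((d : ℝ) / 2) : ℝ) : ℂ) * φ₀ (l • ξ + c)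
    * (starRingEnd ℂ) (ψ₀ ξ)) = fun _ => (0 : ℂ) from funext hz, integral_zero]

lemma core_bound {φ₀ ψ₀ : E → ℂ} {R M : ℝ} (hM : 0 ≤ M)
    (hsφ : ∀ x : E, R < ‖x‖ → φ₀ x = 0) (hsψ : ∀ x : E, R < ‖x‖ → ψ₀ x = 0)
    (hMφ : ∀ x : E, ‖φ₀ x‖ ≤ M) (hMψ : ∀ x : E, ‖ψ₀ x‖ ≤ M)
    {l : ℝ} (hl : 0 < l) (c : E) :
    ‖∫ ξ : E, ((l ^ ((d : ℝ) / 2) : ℝ) : ℂ) * φ₀ (l • ξ + c) * (starRingEnd ℂ) (ψ₀ ξ)‖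
      ≤ M * M * (volume (closedBall (0 : E) R)).toReal
          * min (l ^ ((d : ℝ) / 2)) (l ^ (-(d : ℝ) / 2)) := by
  set S : E → E := fun ξ => l • ξ + c with hS
  set A : Set E := S ⁻¹' (closedBall 0 R) ∩ closedBall 0 R with hA
  have hmeasA : MeasurableSet A :=
    (measurable_S l c measurableSet_closedBall).inter measurableSet_closedBall
  have hVfin : volume (closedBall (0 : E) R) < ∞ := measure_closedBall_lt_top
  have hAsub : A ⊆ closedBall 0 R := inter_subset_right
  have hAfin : volume A < ∞ := lt_of_le_of_lt (measure_mono hAsub) hVfin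
  set V' : ℝ := (volume (closedBall (0 : E) R)).toReal with hV'
  have hV'0 : 0 ≤ V' := ENNReal.toReal_nonneg
  have hzero : ∀ ξ : E, ξ ∉ A →
      ((l ^ ((d : ℝ) / 2) : ℝ) : ℂ) * φ₀ (S ξ) * (starRingEnd ℂ) (ψ₀ ξ) = 0 := by
    intro ξ hξ
    rw [hA, mem_inter_iff, not_and_or] at hξ
    rcases hξ with h | h
    · rw [hsφ _ (by simpa [mem_closedBall, dist_zero_right, not_le] using h : R < ‖S ξ‖),
        mul_zero, zero_mul]
    · rw [hsψ _ (by simpa [mem_closedBall, dist_zero_right, not_le] using h), map_zero,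
        mul_zero]
  have hpos : (0 : ℝ) < l ^ ((d : ℝ) / 2) := Real.rpow_pos_of_pos hl _
  have hsetint :
      ‖∫ ξ : E, ((l ^ ((d : ℝ) / 2) : ℝ) : ℂ) * φ₀ (S ξ) * (starRingEnd ℂ) (ψ₀ ξ)‖
        ≤ l ^ ((d : ℝ) / 2) * (M * M) * (volume A).toReal := by
    rw [← setIntegral_eq_integral_of_forall_compl_eq_zero hzero]
    refine norm_setIntegral_le_of_norm_le_const hAfin ?_
    intro ξ _
    rw [norm_mul, norm_mul, Complex.norm_real, Real.norm_eq_abs, abs_of_pos hpos,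
      RCLike.norm_conj, mul_assoc]
    exact mul_le_mul_of_nonneg_left
      (mul_le_mul (hMφ _) (hMψ _) (norm_nonneg _) hM) hpos.le
  have hpre : volume (S ⁻¹' closedBall (0 : E) R)
      = ENNReal.ofReal ((l ^ d)⁻¹) * volume (closedBall (0 : E) R) := by
    rw [hS, ← Measure.map_apply (measurable_S l c) measurableSet_closedBall,
      map_S hl.ne' c, Measure.smul_apply, smul_eq_mul, abs_of_pos (by positivity)]
  have hA1 : (volume A).toReal ≤ V' :=
    ENNReal.toReal_mono hVfin.ne (measure_mono hAsub)
  have hA2 : (volume A).toReal ≤ (l ^ d)⁻¹ * V' := by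
    have h : volume A ≤ ENNReal.ofReal ((l ^ d)⁻¹) * volume (closedBall (0 : E) R) := by
      rw [hA, ← hpre]; exact measure_mono inter_subset_left
    have := ENNReal.toReal_mono (by
      exact ENNReal.mul_ne_top ENNReal.ofReal_ne_top hVfin.ne) h
    rwa [ENNReal.toReal_mul, ENNReal.toReal_ofReal (by positivity)] at this
  have hkey : l ^ ((d : ℝ) / 2) * (l ^ d)⁻¹ = l ^ (-(d : ℝ) / 2) := by
    rw [← Real.rpow_natCast l d, ← Real.rpow_neg hl.le, ← Real.rpow_add hl]
    congr 1; ring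
  refine hsetint.trans ?_
  rw [mul_min_of_nonneg _ _ (by positivity : (0:ℝ) ≤ M * M * V')]
  refine le_min ?_ ?_
  · calc l ^ ((d : ℝ) / 2) * (M * M) * (volume A).toReal
        ≤ l ^ ((d : ℝ) / 2) * (M * M) * V' :=
          mul_le_mul_of_nonneg_left hA1 (by positivity)
      _ = M * M * V' * l ^ ((d : ℝ) / 2) := by ring
  · calc l ^ ((d : ℝ) / 2) * (M * M) * (volume A).toReal
        ≤ l ^ ((d : ℝ) / 2) * (M * M) * ((l ^ d)⁻¹ * V') :=
          mul_le_mul_of_nonneg_left hA2 (by positivity)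
      _ = M * M * V' * (l ^ ((d : ℝ) / 2) * (l ^ d)⁻¹) := by ring
      _ = M * M * V' * l ^ (-(d : ℝ) / 2) := by rw [hkey]

end DilatedAux

set_option maxHeartbeats 1000000 in
theorem dilated_translate_weak_limit_vanishing
    (d : ℕ) (hd : 1 ≤ d) (φ : EuclideanSpace ℝ (Fin d) → ℂ)
    (hφ : MemLp φ 2 volume)
    (lam : ℕ → ℝ) (hlam : ∀ n, 0 < lam n)
    (c : ℕ → EuclideanSpace ℝ (Fin d))
    (hdiv : Filter.Tendsto (fun n => lam n + (lam n)⁻¹ + ‖c n‖)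
      Filter.atTop Filter.atTop) :
    ∀ ψ : EuclideanSpace ℝ (Fin d) → ℂ, MemLp ψ 2 volume →
      Filter.Tendsto (fun n => ∫ ξ,
          (((lam n ^ ((d : ℝ) / 2) : ℝ) : ℂ) * φ (lam n • ξ + c n)) *
            (starRingEnd ℂ) (ψ ξ))
        Filter.atTop (nhds 0) := by
  intro ψ hψ
  refine NormedAddCommGroup.tendsto_nhds_zero.mpr ?_
  intro ε hε
  set Bφ := (eLpNorm φ 2 volume).toReal with hBφ
  set Bψ := (eLpNorm ψ 2 volume).toReal with hBψ
  have hBφ0 : 0 ≤ Bφ := ENNReal.toReal_nonneg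
  have hBψ0 : 0 ≤ Bψ := ENNReal.toReal_nonneg
  set δ : ℝ := min 1 (ε / (3 * (Bφ + Bψ + 2))) with hδ
  have hδpos : 0 < δ := lt_min one_pos (by positivity)
  have hδ1 : δ ≤ 1 := min_le_left _ _
  have hδ2 : δ * (Bφ + Bψ + 2) ≤ ε / 3 := by
    have h := min_le_right (1 : ℝ) (ε / (3 * (Bφ + Bψ + 2)))
    calc δ * (Bφ + Bψ + 2) ≤ (ε / (3 * (Bφ + Bψ + 2))) * (Bφ + Bψ + 2) :=
          mul_le_mul_of_nonneg_right (hδ ▸ h) (by positivity)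
      _ = ε / 3 := by field_simp
  obtain ⟨φ₀, hφ₀supp, hφ₀close, hφ₀cont, hφ₀mem⟩ :=
    hφ.exists_hasCompactSupport_eLpNorm_sub_le (by norm_num : (2 : ℝ≥0∞) ≠ ∞)
      (ε := ENNReal.ofReal δ) (ENNReal.ofReal_pos.2 hδpos).ne'
  obtain ⟨ψ₀, hψ₀supp, hψ₀close, hψ₀cont, hψ₀mem⟩ :=
    hψ.exists_hasCompactSupport_eLpNorm_sub_le (by norm_num : (2 : ℝ≥0∞) ≠ ∞)
      (ε := ENNReal.ofReal δ) (ENNReal.ofReal_pos.2 hδpos).ne'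
  have hφd : MemLp (φ - φ₀) 2 volume := hφ.sub hφ₀mem
  have hψd : MemLp (ψ - ψ₀) 2 volume := hψ.sub hψ₀mem
  have hφdn : (eLpNorm (φ - φ₀) 2 volume).toReal ≤ δ :=
    ENNReal.toReal_le_of_le_ofReal hδpos.le hφ₀close
  have hψdn : (eLpNorm (ψ - ψ₀) 2 volume).toReal ≤ δ :=
    ENNReal.toReal_le_of_le_ofReal hδpos.le hψ₀close
  have hφ₀n : (eLpNorm φ₀ 2 volume).toReal ≤ Bφ + δ := by
    have h0 : φ₀ = φ - (φ - φ₀) := by ext x; simp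
    have h1 : eLpNorm φ₀ 2 volume ≤ eLpNorm φ 2 volume + ENNReal.ofReal δ := by
      calc eLpNorm φ₀ 2 volume = eLpNorm (φ - (φ - φ₀)) 2 volume := by rw [← h0]
        _ ≤ eLpNorm φ 2 volume + eLpNorm (φ - φ₀) 2 volume :=
            eLpNorm_sub_le hφ.1 hφd.1 one_le_two
        _ ≤ _ := add_le_add_right hφ₀close _
    have h2 := ENNReal.toReal_mono
      (ENNReal.add_ne_top.2 ⟨hφ.2.ne, ENNReal.ofReal_ne_top⟩) h1
    rwa [ENNReal.toReal_add hφ.2.ne ENNReal.ofReal_ne_top,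
      ENNReal.toReal_ofReal hδpos.le] at h2
  obtain ⟨R₀, hR₀⟩ := hφ₀supp.isBounded.subset_closedBall (0 : EuclideanSpace ℝ (Fin d))
  obtain ⟨R₁, hR₁⟩ := hψ₀supp.isBounded.subset_closedBall (0 : EuclideanSpace ℝ (Fin d))
  set R : ℝ := max 0 (max R₀ R₁) with hR
  have hR0 : 0 ≤ R := le_max_left _ _
  have hsφ : ∀ x : EuclideanSpace ℝ (Fin d), R < ‖x‖ → φ₀ x = 0 := by
    intro x hx
    apply image_eq_zero_of_notMem_tsupport
    intro hmem
    have h' := hR₀ hmem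
    rw [Metric.mem_closedBall, dist_zero_right] at h'
    have : ‖x‖ ≤ R := h'.trans ((le_max_left R₀ R₁).trans (le_max_right 0 _))
    linarith
  have hsψ : ∀ x : EuclideanSpace ℝ (Fin d), R < ‖x‖ → ψ₀ x = 0 := by
    intro x hx
    apply image_eq_zero_of_notMem_tsupport
    intro hmem
    have h' := hR₁ hmem
    rw [Metric.mem_closedBall, dist_zero_right] at h'
    have : ‖x‖ ≤ R := h'.trans ((le_max_right R₀ R₁).trans (le_max_right 0 _))
    linarith
  obtain ⟨M₀, hM₀⟩ := hφ₀cont.bounded_above_of_compact_support hφ₀supp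
  obtain ⟨M₁, hM₁⟩ := hψ₀cont.bounded_above_of_compact_support hψ₀supp
  set M : ℝ := max 0 (max M₀ M₁) with hMdef
  have hM : 0 ≤ M := le_max_left _ _
  have hMφ : ∀ x : EuclideanSpace ℝ (Fin d), ‖φ₀ x‖ ≤ M :=
    fun x => (hM₀ x).trans ((le_max_left M₀ M₁).trans (le_max_right 0 _))
  have hMψ : ∀ x : EuclideanSpace ℝ (Fin d), ‖ψ₀ x‖ ≤ M :=
    fun x => (hM₁ x).trans ((le_max_right M₀ M₁).trans (le_max_right 0 _))
  set V' : ℝ := (volume (Metric.closedBall (0 : EuclideanSpace ℝ (Fin d)) R)).toReal with hV'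
  have hV'0 : 0 ≤ V' := ENNReal.toReal_nonneg
  set C : ℝ := M * M * V' with hC
  have hC0 : 0 ≤ C := by positivity
  set K : ℝ := max 1 ((3 * (C + 1) / ε) ^ 2) with hK
  have hK1 : 1 ≤ K := le_max_left _ _
  have hK0 : 0 < K := lt_of_lt_of_le one_pos hK1
  have hKb : C * K ^ (-(1 : ℝ) / 2) < ε / 3 := by
    have hs : 3 * (C + 1) / ε ≤ Real.sqrt K := by
      have h := Real.sqrt_le_sqrt (le_max_right 1 ((3 * (C + 1) / ε) ^ 2))
      rwa [Real.sqrt_sq (by positivity)] at h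
    have hKr : K ^ (-(1 : ℝ) / 2) = (Real.sqrt K)⁻¹ := by
      rw [show (-(1 : ℝ) / 2) = -(1 / 2 : ℝ) by ring, Real.rpow_neg hK0.le,
        Real.sqrt_eq_rpow]
    have hsk0 : 0 < Real.sqrt K := Real.sqrt_pos.2 hK0
    have h1 : (Real.sqrt K)⁻¹ ≤ ε / (3 * (C + 1)) := by
      have := inv_anti₀ (by positivity : (0:ℝ) < 3 * (C + 1) / ε) hs
      rwa [inv_div] at this
    have h2 : C * (ε / (3 * (C + 1))) < ε / 3 := by
      have hu0 : 0 < ε / (3 * (C + 1)) := by positivity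
      have hu : (C + 1) * (ε / (3 * (C + 1))) = ε / 3 := by
        rw [← mul_div_assoc, mul_comm (3 : ℝ) (C + 1),
          mul_div_mul_left _ _ (by positivity : (0:ℝ) < C + 1).ne']
      calc C * (ε / (3 * (C + 1))) < (C + 1) * (ε / (3 * (C + 1))) := by nlinarith
        _ = ε / 3 := hu
    calc C * K ^ (-(1 : ℝ) / 2) = C * (Real.sqrt K)⁻¹ := by rw [hKr]
      _ ≤ C * (ε / (3 * (C + 1))) := mul_le_mul_of_nonneg_left h1 hC0
      _ < ε / 3 := h2
  filter_upwards [hdiv.eventually_gt_atTop (2 * K + R * (1 + K))] with n hn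
  set l : ℝ := lam n with hldef
  have hl : 0 < l := hlam n
  set cn : EuclideanSpace ℝ (Fin d) := c n with hcn
  have hTφd := DilatedAux.memLp_T hl cn hφd
  have hTφ₀ := DilatedAux.memLp_T hl cn hφ₀mem
  have hint1 : Integrable (fun ξ : EuclideanSpace ℝ (Fin d) =>
      (((l ^ ((d : ℝ) / 2) : ℝ) : ℂ) * (φ - φ₀) (l • ξ + cn)) * (starRingEnd ℂ) (ψ ξ)) volume :=
    DilatedAux.l2_integrable hTφd hψ
  have hint2 : Integrable (fun ξ : EuclideanSpace ℝ (Fin d) =>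
      (((l ^ ((d : ℝ) / 2) : ℝ) : ℂ) * φ₀ (l • ξ + cn)) * (starRingEnd ℂ) ((ψ - ψ₀) ξ)) volume :=
    DilatedAux.l2_integrable hTφ₀ hψd
  have hint3 : Integrable (fun ξ : EuclideanSpace ℝ (Fin d) =>
      (((l ^ ((d : ℝ) / 2) : ℝ) : ℂ) * φ₀ (l • ξ + cn)) * (starRingEnd ℂ) (ψ₀ ξ)) volume :=
    DilatedAux.l2_integrable hTφ₀ hψ₀mem
  have key : (∫ ξ, (((l ^ ((d : ℝ) / 2) : ℝ) : ℂ) * φ (l • ξ + cn)) * (starRingEnd ℂ) (ψ ξ))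
      = (∫ ξ, (((l ^ ((d : ℝ) / 2) : ℝ) : ℂ) * (φ - φ₀) (l • ξ + cn)) * (starRingEnd ℂ) (ψ ξ))
        + ((∫ ξ, (((l ^ ((d : ℝ) / 2) : ℝ) : ℂ) * φ₀ (l • ξ + cn))
              * (starRingEnd ℂ) ((ψ - ψ₀) ξ))
          + ∫ ξ, (((l ^ ((d : ℝ) / 2) : ℝ) : ℂ) * φ₀ (l • ξ + cn))
              * (starRingEnd ℂ) (ψ₀ ξ)) := by
    have hint23 : Integrable (fun ξ : EuclideanSpace ℝ (Fin d) =>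
        (((l ^ ((d : ℝ) / 2) : ℝ) : ℂ) * φ₀ (l • ξ + cn)) * (starRingEnd ℂ) ((ψ - ψ₀) ξ)
          + (((l ^ ((d : ℝ) / 2) : ℝ) : ℂ) * φ₀ (l • ξ + cn)) * (starRingEnd ℂ) (ψ₀ ξ))
        volume := hint2.add hint3
    calc (∫ ξ, (((l ^ ((d : ℝ) / 2) : ℝ) : ℂ) * φ (l • ξ + cn)) * (starRingEnd ℂ) (ψ ξ))
        = ∫ ξ, ((((l ^ ((d : ℝ) / 2) : ℝ) : ℂ) * (φ - φ₀) (l • ξ + cn)) * (starRingEnd ℂ) (ψ ξ)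
            + ((((l ^ ((d : ℝ) / 2) : ℝ) : ℂ) * φ₀ (l • ξ + cn)) * (starRingEnd ℂ) ((ψ - ψ₀) ξ)
              + (((l ^ ((d : ℝ) / 2) : ℝ) : ℂ) * φ₀ (l • ξ + cn)) * (starRingEnd ℂ) (ψ₀ ξ))) := by
          refine integral_congr_ae (Filter.Eventually.of_forall fun ξ => ?_)
          simp only [Pi.sub_apply, map_sub]
          ring
      _ = (∫ ξ, (((l ^ ((d : ℝ) / 2) : ℝ) : ℂ) * (φ - φ₀) (l • ξ + cn)) * (starRingEnd ℂ) (ψ ξ))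
          + ∫ ξ, ((((l ^ ((d : ℝ) / 2) : ℝ) : ℂ) * φ₀ (l • ξ + cn)) * (starRingEnd ℂ) ((ψ - ψ₀) ξ)
              + (((l ^ ((d : ℝ) / 2) : ℝ) : ℂ) * φ₀ (l • ξ + cn)) * (starRingEnd ℂ) (ψ₀ ξ)) :=
          integral_add hint1 hint23
      _ = _ := by rw [integral_add hint2 hint3]
  rw [key]
  have h1b : ‖∫ ξ, (((l ^ ((d : ℝ) / 2) : ℝ) : ℂ) * (φ - φ₀) (l • ξ + cn))
      * (starRingEnd ℂ) (ψ ξ)‖ ≤ δ * Bψ := by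
    have h := DilatedAux.l2_CS hTφd hψ
    rw [DilatedAux.eLpNorm_T hl cn hφd.1] at h
    exact h.trans (mul_le_mul_of_nonneg_right hφdn hBψ0)
  have h2b : ‖∫ ξ, (((l ^ ((d : ℝ) / 2) : ℝ) : ℂ) * φ₀ (l • ξ + cn))
      * (starRingEnd ℂ) ((ψ - ψ₀) ξ)‖ ≤ (Bφ + δ) * δ := by
    have h := DilatedAux.l2_CS hTφ₀ hψd
    rw [DilatedAux.eLpNorm_T hl cn hφ₀mem.1] at h
    exact h.trans (mul_le_mul hφ₀n hψdn ENNReal.toReal_nonneg (by positivity))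
  have h3b : ‖∫ ξ, (((l ^ ((d : ℝ) / 2) : ℝ) : ℂ) * φ₀ (l • ξ + cn))
      * (starRingEnd ℂ) (ψ₀ ξ)‖ < ε / 3 := by
    have hd1 : (1 : ℝ) ≤ (d : ℝ) := by exact_mod_cast hd
    rcases le_or_gt K l with hKl | hlK
    · have hb := DilatedAux.core_bound hM hsφ hsψ hMφ hMψ hl cn
      refine lt_of_le_of_lt (hb.trans ?_) hKb
      refine mul_le_mul_of_nonneg_left ((min_le_right _ _).trans ?_) hC0
      calc l ^ (-(d : ℝ) / 2) ≤ K ^ (-(d : ℝ) / 2) := by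
            rw [show -(d : ℝ) / 2 = -((d : ℝ) / 2) by ring, Real.rpow_neg hK0.le,
              Real.rpow_neg (hK0.le.trans hKl)]
            exact inv_anti₀ (Real.rpow_pos_of_pos hK0 _)
              (Real.rpow_le_rpow hK0.le hKl (by positivity))
        _ ≤ K ^ (-(1 : ℝ) / 2) :=
            Real.rpow_le_rpow_of_exponent_le hK1 (by linarith)
    · rcases le_or_gt l K⁻¹ with hlK' | hKl'
      · have hb := DilatedAux.core_bound hM hsφ hsψ hMφ hMψ hl cn
        refine lt_of_le_of_lt (hb.trans ?_) hKb
        refine mul_le_mul_of_nonneg_left ((min_le_left _ _).trans ?_) hC0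
        calc l ^ ((d : ℝ) / 2) ≤ (K⁻¹) ^ ((d : ℝ) / 2) :=
              Real.rpow_le_rpow hl.le hlK' (by positivity)
          _ = K ^ (-((d : ℝ) / 2)) := by
              rw [Real.inv_rpow hK0.le, ← Real.rpow_neg hK0.le]
          _ ≤ K ^ (-(1 : ℝ) / 2) :=
              Real.rpow_le_rpow_of_exponent_le hK1 (by linarith)
      · have hlinv : l⁻¹ < K := by
          have := inv_strictAnti₀ (inv_pos.2 hK0) hKl'
          rwa [inv_inv] at this
        have hcc : R * (1 + l) < ‖cn‖ := by
          have h5 : R * (1 + l) ≤ R * (1 + K) :=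
            mul_le_mul_of_nonneg_left (by linarith) hR0
          have h6 : 2 * K + R * (1 + K) < l + l⁻¹ + ‖cn‖ := hn
          linarith
        rw [DilatedAux.core_vanish hsφ hsψ hl hcc, norm_zero]
        positivity
  calc ‖(∫ ξ, (((l ^ ((d : ℝ) / 2) : ℝ) : ℂ) * (φ - φ₀) (l • ξ + cn)) * (starRingEnd ℂ) (ψ ξ))
        + ((∫ ξ, (((l ^ ((d : ℝ) / 2) : ℝ) : ℂ) * φ₀ (l • ξ + cn))
              * (starRingEnd ℂ) ((ψ - ψ₀) ξ))
          + ∫ ξ, (((l ^ ((d : ℝ) / 2) : ℝ) : ℂ) * φ₀ (l • ξ + cn))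
              * (starRingEnd ℂ) (ψ₀ ξ))‖
      ≤ ‖∫ ξ, (((l ^ ((d : ℝ) / 2) : ℝ) : ℂ) * (φ - φ₀) (l • ξ + cn))
              * (starRingEnd ℂ) (ψ ξ)‖
        + (‖∫ ξ, (((l ^ ((d : ℝ) / 2) : ℝ) : ℂ) * φ₀ (l • ξ + cn))
              * (starRingEnd ℂ) ((ψ - ψ₀) ξ)‖
          + ‖∫ ξ, (((l ^ ((d : ℝ) / 2) : ℝ) : ℂ) * φ₀ (l • ξ + cn))
              * (starRingEnd ℂ) (ψ₀ ξ)‖) :=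
        (norm_add_le _ _).trans (add_le_add_right (norm_add_le _ _) _)
    _ < ε := by nlinarith
end
end

section
/- Quantitative mass extraction: let f ∈ L^p(R^d) with ‖f‖_p = 1 and define inductively r⁰ = f, fʲ = r^{j-1}·1_{τ^j}·1_{{|f| < 2^j|τ^j|^{-1/p}}}, r^j = r^{j-1} − f^j, where at each step τ^j is a dyadic cube maximizing ‖r^{j-1}·1_τ·1_{{|f|<2^j|τ|^{-1/p}}}‖_p. Then for every j ≥ 1, A_j := sup_τ ‖r^{2j}·1_τ·1_{{|f|<2^j|τ|^{-1/p}}}‖_{L^p} satisfies A_j ≤ j^{-1/p}. -/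
open MeasureTheory
open scoped ENNReal

/-- The dyadic cube of side length `2^{-k}` with corner `m · 2^{-k}`. -/
def dyadicCube (d : ℕ) (k : ℤ) (m : Fin d → ℤ) : Set (EuclideanSpace ℝ (Fin d)) :=
  {ξ | ∀ i, (m i : ℝ) * (2 : ℝ) ^ (-k : ℤ) ≤ ξ i ∧ ξ i ≤ ((m i : ℝ) + 1) * (2 : ℝ) ^ (-k : ℤ)}

-- The chip of `g` on the dyadic cube `(k, m)` with truncation of `f` at height
-- `2^j |τ|^{-1/p}` (for `‖f‖_p = 1`, since `|τ|^{-1/p} = 2^{kd/p}`).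
open Classical in
noncomputable def chip (d : ℕ) (p : ℝ) (f g : EuclideanSpace ℝ (Fin d) → ℂ)
    (j : ℕ) (k : ℤ) (m : Fin d → ℤ) : EuclideanSpace ℝ (Fin d) → ℂ :=
  fun ξ => if ξ ∈ dyadicCube d k m ∧
      ‖f ξ‖ < 2 ^ j * (2 : ℝ) ^ ((k : ℝ) * d / p) then g ξ else 0

/-- Finset superadditivity of the lower Lebesgue integral. -/
theorem finset_sum_lintegral_le {α : Type*} [MeasurableSpace α] (μ : Measure α)
    {ι : Type*} (s : Finset ι) (g : ι → α → ℝ≥0∞) :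
    ∑ i ∈ s, ∫⁻ x, g i x ∂μ ≤ ∫⁻ x, ∑ i ∈ s, g i x ∂μ := by
  classical
  induction s using Finset.induction_on with
  | empty => simp
  | insert a s hni ih =>
    rw [Finset.sum_insert hni]
    calc (∫⁻ x, g a x ∂μ) + ∑ i ∈ s, ∫⁻ x, g i x ∂μ
        ≤ (∫⁻ x, g a x ∂μ) + ∫⁻ x, ∑ i ∈ s, g i x ∂μ := by gcongr
      _ ≤ ∫⁻ x, g a x + ∑ i ∈ s, g i x ∂μ := le_lintegral_add _ _
      _ = ∫⁻ x, ∑ i ∈ insert a s, g i x ∂μ := by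
          simp [Finset.sum_insert hni]

theorem chip_extraction_mass_decay
    (d : ℕ) (hd : 1 ≤ d) (p : ℝ) (hp : 1 ≤ p)
    (f : EuclideanSpace ℝ (Fin d) → ℂ)
    (hf : MemLp f (ENNReal.ofReal p) volume)
    (hnorm : eLpNorm f (ENNReal.ofReal p) volume = 1)
    (r : ℕ → EuclideanSpace ℝ (Fin d) → ℂ) (kc : ℕ → ℤ) (mc : ℕ → Fin d → ℤ)
    (hr0 : r 0 = f)
    (hrec : ∀ j : ℕ,
      r (j + 1) = fun ξ => r j ξ - chip d p f (r j) (j + 1) (kc (j + 1)) (mc (j + 1)) ξ)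
    (hmax : ∀ j : ℕ, ∀ (k : ℤ) (m : Fin d → ℤ),
      eLpNorm (chip d p f (r j) (j + 1) k m) (ENNReal.ofReal p) volume ≤
        eLpNorm (chip d p f (r j) (j + 1) (kc (j + 1)) (mc (j + 1)))
          (ENNReal.ofReal p) volume) :
    ∀ j : ℕ, 1 ≤ j → ∀ (k : ℤ) (m : Fin d → ℤ),
      eLpNorm (chip d p f (r (2 * j)) j k m) (ENNReal.ofReal p) volume ≤
        ENNReal.ofReal ((j : ℝ) ^ (-(1 / p))) := by
  intro j hj k m
  have hp0 : (0:ℝ) < p := lt_of_lt_of_le one_pos hp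
  set q := ENNReal.ofReal p with hqdef
  have hq0 : q ≠ 0 := by simp [hqdef, ENNReal.ofReal_eq_zero]; linarith
  have hqt : q ≠ ∞ := ENNReal.ofReal_ne_top
  have hqr : q.toReal = p := ENNReal.toReal_ofReal hp0.le
  -- step structure of r
  have step : ∀ n ξ, r (n+1) ξ = r n ξ ∨ r (n+1) ξ = 0 := by
    intro n ξ
    have : r (n+1) ξ = r n ξ - chip d p f (r n) (n+1) (kc (n+1)) (mc (n+1)) ξ := by
      rw [hrec n]
    rw [this]
    simp only [chip]
    split_ifs
    · right; ring
    · left; ring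
  have mono : ∀ n n' ξ, n ≤ n' → r n' ξ = r n ξ ∨ r n' ξ = 0 := by
    intro n n' ξ h
    induction n', h using Nat.le_induction with
    | base => left; rfl
    | succ n' h ih =>
      rcases step n' ξ with h1 | h1
      · rcases ih with h2 | h2
        · left; rw [h1, h2]
        · right; rw [h1, h2]
      · right; exact h1
  -- abbreviate the selected chips
  set F : ℕ → EuclideanSpace ℝ (Fin d) → ℂ :=
    fun i => chip d p f (r i) (i+1) (kc (i+1)) (mc (i+1)) with hF
  have key : ∀ i ξ, F i ξ ≠ 0 → F i ξ = r i ξ ∧ r (i+1) ξ = 0 := by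
    intro i ξ h
    have hcond : ξ ∈ dyadicCube d (kc (i+1)) (mc (i+1)) ∧
        ‖f ξ‖ < 2 ^ (i+1) * (2:ℝ) ^ ((kc (i+1) : ℝ) * d / p) := by
      by_contra hc
      exact h (by simp [hF, chip, hc])
    have hFe : F i ξ = r i ξ := by simp [hF, chip, hcond]
    refine ⟨hFe, ?_⟩
    have : r (i+1) ξ = r i ξ - chip d p f (r i) (i+1) (kc (i+1)) (mc (i+1)) ξ := by
      rw [hrec i]
    rw [this, show chip d p f (r i) (i+1) (kc (i+1)) (mc (i+1)) ξ = F i ξ from rfl,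
      hFe, sub_self]
  have disj : ∀ i i' ξ, i < i' → F i ξ ≠ 0 → F i' ξ = 0 := by
    intro i i' ξ hii h
    have h0 : r (i+1) ξ = 0 := (key i ξ h).2
    have h1 : r i' ξ = 0 := by
      rcases mono (i+1) i' ξ hii with h2 | h2
      · rw [h2, h0]
      · exact h2
    simp only [hF, chip]
    split_ifs
    · exact h1
    · rfl
  -- pointwise bound on the sum of chip masses
  have ptsum : ∀ ξ, ∑ i ∈ Finset.Ico j (2*j), (‖F i ξ‖₊ : ℝ≥0∞) ^ p ≤ (‖f ξ‖₊ : ℝ≥0∞) ^ p := by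
    intro ξ
    by_cases hall : ∀ i ∈ Finset.Ico j (2*j), F i ξ = 0
    · have : ∑ i ∈ Finset.Ico j (2*j), (‖F i ξ‖₊ : ℝ≥0∞) ^ p = 0 := by
        apply Finset.sum_eq_zero
        intro i hi
        rw [hall i hi]
        simp [ENNReal.zero_rpow_of_pos hp0]
      rw [this]; exact zero_le
    · push_neg at hall
      obtain ⟨i₀, hi₀m, hi₀⟩ := hall
      rw [Finset.sum_eq_single_of_mem i₀ hi₀m ?_]
      · have hFe : F i₀ ξ = r i₀ ξ := (key i₀ ξ hi₀).1
        have hle : ‖F i₀ ξ‖ ≤ ‖f ξ‖ := by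
          rw [hFe]
          rcases mono 0 i₀ ξ (Nat.zero_le _) with h1 | h1
          · rw [h1, hr0]
          · rw [h1]; simp
        refine ENNReal.rpow_le_rpow ?_ hp0.le
        exact_mod_cast hle
      · intro i hi hne
        rcases lt_or_gt_of_ne hne with hlt | hgt
        · have : F i ξ = 0 := by
            by_contra hc
            exact hi₀ (disj i i₀ ξ hlt hc)
          rw [this]; simp [ENNReal.zero_rpow_of_pos hp0]
        · rw [disj i₀ i ξ hgt hi₀]; simp [ENNReal.zero_rpow_of_pos hp0]
  -- comparison of A with each selected chip
  set A := chip d p f (r (2*j)) j k m with hA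
  have hAF : ∀ i ∈ Finset.Ico j (2*j), eLpNorm A q volume ≤ eLpNorm (F i) q volume := by
    intro i hi
    rw [Finset.mem_Ico] at hi
    calc eLpNorm A q volume
        ≤ eLpNorm (chip d p f (r i) (i+1) k m) q volume := by
          apply eLpNorm_mono
          intro ξ
          simp only [hA, chip]
          split_ifs with h1 h2
          · -- both conditions hold
            rcases mono i (2*j) ξ (le_of_lt hi.2) with h3 | h3
            · rw [h3]
            · rw [h3]; simp
          · -- contradiction: cond at level j implies cond at level i+1
            exfalso
            apply h2
            refine ⟨h1.1, lt_of_lt_of_le h1.2 ?_⟩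
            have hC : (0:ℝ) < (2:ℝ) ^ ((k : ℝ) * d / p) := Real.rpow_pos_of_pos (by norm_num) _
            have : (2:ℝ) ^ j ≤ (2:ℝ) ^ (i+1) := by
              apply pow_le_pow_right₀ (by norm_num)
              omega
            nlinarith
          · simp
          · simp
      _ ≤ eLpNorm (F i) q volume := hmax i k m
  -- pass to p-th powers / integrals
  have hformula : ∀ g : EuclideanSpace ℝ (Fin d) → ℂ,
      eLpNorm g q volume = (∫⁻ ξ, (‖g ξ‖₊ : ℝ≥0∞) ^ p) ^ (1/p) := by
    intro g
    simp only [← enorm_eq_nnnorm]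
    rw [eLpNorm_eq_lintegral_rpow_enorm_toReal hq0 hqt, hqr]
  have hpow : ∀ g : EuclideanSpace ℝ (Fin d) → ℂ,
      (eLpNorm g q volume) ^ p = ∫⁻ ξ, (‖g ξ‖₊ : ℝ≥0∞) ^ p := by
    intro g
    rw [hformula g, one_div, ← ENNReal.rpow_mul, inv_mul_cancel₀ (ne_of_gt hp0),
      ENNReal.rpow_one]
  have hsum : ∑ i ∈ Finset.Ico j (2*j), (eLpNorm (F i) q volume) ^ p ≤ 1 := by
    calc ∑ i ∈ Finset.Ico j (2*j), (eLpNorm (F i) q volume) ^ p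
        = ∑ i ∈ Finset.Ico j (2*j), ∫⁻ ξ, (‖F i ξ‖₊ : ℝ≥0∞) ^ p := by
          exact Finset.sum_congr rfl fun i _ => hpow (F i)
      _ ≤ ∫⁻ ξ, ∑ i ∈ Finset.Ico j (2*j), (‖F i ξ‖₊ : ℝ≥0∞) ^ p :=
          finset_sum_lintegral_le _ _ _
      _ ≤ ∫⁻ ξ, (‖f ξ‖₊ : ℝ≥0∞) ^ p := lintegral_mono ptsum
      _ = (eLpNorm f q volume) ^ p := (hpow f).symm
      _ = 1 := by rw [hnorm]; simp
  have hjA : (j : ℝ≥0∞) * (eLpNorm A q volume) ^ p ≤ 1 := by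
    calc (j : ℝ≥0∞) * (eLpNorm A q volume) ^ p
        = ∑ _i ∈ Finset.Ico j (2*j), (eLpNorm A q volume) ^ p := by
          rw [Finset.sum_const, Nat.card_Ico, nsmul_eq_mul]
          congr 2
          omega
      _ ≤ ∑ i ∈ Finset.Ico j (2*j), (eLpNorm (F i) q volume) ^ p := by
          apply Finset.sum_le_sum
          intro i hi
          exact ENNReal.rpow_le_rpow (hAF i hi) hp0.le
      _ ≤ 1 := hsum
  -- conclude
  have hjne : (j : ℝ≥0∞) ≠ 0 := Nat.cast_ne_zero.mpr (by omega)
  have hjt : (j : ℝ≥0∞) ≠ ∞ := ENNReal.natCast_ne_top j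
  have hX : (eLpNorm A q volume) ^ p ≤ (j : ℝ≥0∞)⁻¹ := by
    calc (eLpNorm A q volume) ^ p
        = (j:ℝ≥0∞)⁻¹ * ((j:ℝ≥0∞) * (eLpNorm A q volume) ^ p) := by
          rw [← mul_assoc, ENNReal.inv_mul_cancel hjne hjt, one_mul]
      _ ≤ (j:ℝ≥0∞)⁻¹ * 1 := by gcongr
      _ = (j:ℝ≥0∞)⁻¹ := mul_one _
  have hfin : eLpNorm A q volume ≤ ((j:ℝ≥0∞)⁻¹) ^ (1/p) := by
    have h2 := ENNReal.rpow_le_rpow hX (le_of_lt (by positivity : (0:ℝ) < 1/p))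
    rwa [← ENNReal.rpow_mul, mul_one_div, div_self (ne_of_gt hp0), ENNReal.rpow_one] at h2
  refine le_trans hfin (le_of_eq ?_)
  have hjpos : (0:ℝ) < (j:ℝ) := by exact_mod_cast (by omega : 0 < j)
  rw [show ((j:ℝ≥0∞))⁻¹ = ENNReal.ofReal (j:ℝ)⁻¹ by
      rw [← ENNReal.ofReal_natCast j, ← ENNReal.ofReal_inv_of_pos hjpos],
    ENNReal.ofReal_rpow_of_pos (by positivity)]
  congr 1
  rw [Real.rpow_neg hjpos.le, ← Real.inv_rpow hjpos.le]
end

section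
/- The supremum over dyadic cubes of the truncated chip norm is attained: for f ∈ L^p(R^d), f ≠ 0, and fixed j ∈ N, the quantity sup_{τ dyadic} ‖f·1_τ·1_{{ξ : |f(ξ)| < 2^j |τ|^{-1/p}‖f‖_p}}‖_{L^p(R^d)}, if nonzero, is attained by some dyadic cube τ*. -/
open MeasureTheory Filter
open scoped ENNReal Topology

-- The truncated chip of `f` on the dyadic cube `(k, m)`: `f·1_τ·1_{|f| < 2^j |τ|^{-1/p} ‖f‖_p}`,
-- where `|τ|^{-1/p} = 2^{kd/p}`.
open Classical in
noncomputable def truncChip (d : ℕ) (p : ℝ) (f : EuclideanSpace ℝ (Fin d) → ℂ)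
    (j : ℕ) (k : ℤ) (m : Fin d → ℤ) : EuclideanSpace ℝ (Fin d) → ℂ :=
  fun ξ => if ξ ∈ dyadicCube d k m ∧
      ‖f ξ‖ < 2 ^ j * (2 : ℝ) ^ ((k : ℝ) * d / p) *
        (eLpNorm f (ENNReal.ofReal p) volume).toReal then f ξ else 0

lemma dyadicCube_eq_preimage (d : ℕ) (k : ℤ) (m : Fin d → ℤ) :
    dyadicCube d k m = ((MeasurableEquiv.toLp 2 (Fin d → ℝ)).symm) ⁻¹'
      (Set.univ.pi fun i => Set.Icc ((m i : ℝ) * (2 : ℝ) ^ (-k : ℤ))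
        (((m i : ℝ) + 1) * (2 : ℝ) ^ (-k : ℤ))) := by
  ext ξ
  simp only [dyadicCube, Set.mem_setOf_eq, Set.mem_preimage, Set.mem_pi, Set.mem_univ,
    Set.mem_Icc, forall_const]
  rfl

lemma measurableSet_dyadicCube (d : ℕ) (k : ℤ) (m : Fin d → ℤ) :
    MeasurableSet (dyadicCube d k m) := by
  rw [dyadicCube_eq_preimage]
  exact ((MeasurableEquiv.toLp 2 (Fin d → ℝ)).symm).measurable
    (MeasurableSet.univ_pi fun i => measurableSet_Icc)

lemma volume_dyadicCube (d : ℕ) (k : ℤ) (m : Fin d → ℤ) :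
    volume (dyadicCube d k m) = ENNReal.ofReal ((2 : ℝ) ^ (-k : ℤ)) ^ d := by
  rw [dyadicCube_eq_preimage,
    (EuclideanSpace.volume_preserving_symm_measurableEquiv_toLp (Fin d)).measure_preimage
      ((MeasurableSet.univ_pi fun i => measurableSet_Icc).nullMeasurableSet),
    volume_pi_pi]
  have h1 : ∀ x : Fin d, ((m x : ℝ) + 1) * (2 : ℝ) ^ (-k : ℤ) - (m x : ℝ) * (2 : ℝ) ^ (-k : ℤ)
      = (2 : ℝ) ^ (-k : ℤ) := by intro x; ring
  simp only [Real.volume_Icc, h1, Finset.prod_const, Finset.card_univ, Fintype.card_fin]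

lemma volume_dyadicCube_inter (d : ℕ) (k : ℤ) (m m' : Fin d → ℤ) (h : m ≠ m') :
    volume (dyadicCube d k m ∩ dyadicCube d k m') = 0 := by
  have key : ∀ (a b : Fin d → ℤ) (i : Fin d), a i < b i →
      volume (dyadicCube d k a ∩ dyadicCube d k b) = 0 := by
    intro a b i hi
    set h2 : ℝ := (2 : ℝ) ^ (-k : ℤ) with hh2
    have h2pos : 0 < h2 := by positivity
    have hsub : dyadicCube d k a ∩ dyadicCube d k b ⊆
        ((MeasurableEquiv.toLp 2 (Fin d → ℝ)).symm) ⁻¹'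
          (Set.univ.pi fun l => if l = i then Set.Icc ((b i : ℝ) * h2) (((a i : ℝ) + 1) * h2)
            else Set.univ) := by
      rintro ξ ⟨hξa, hξb⟩ l _
      by_cases hl : l = i
      · subst hl
        simp only [if_pos rfl, Set.mem_Icc]
        exact ⟨(hξb l).1, (hξa l).2⟩
      · simp [hl]
    refine measure_mono_null hsub ?_
    rw [(EuclideanSpace.volume_preserving_symm_measurableEquiv_toLp (Fin d)).measure_preimage
        ((MeasurableSet.univ_pi fun l => by
          by_cases hl : l = i <;> simp [hl, measurableSet_Icc]).nullMeasurableSet),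
      volume_pi_pi]
    refine Finset.prod_eq_zero (Finset.mem_univ i) ?_
    simp only [eq_self_iff_true, if_true, Real.volume_Icc, ENNReal.ofReal_eq_zero]
    have hab : (a i : ℝ) + 1 ≤ (b i : ℝ) := by exact_mod_cast hi
    nlinarith
  have : ∃ i, m i ≠ m' i := by
    by_contra hc
    push_neg at hc
    exact h (funext hc)
  obtain ⟨i, hi⟩ := this
  rcases lt_or_gt_of_ne hi with h' | h'
  · exact key m m' i h'
  · rw [Set.inter_comm]; exact key m' m i h'

theorem trunc_chip_aux
    (d : ℕ) (hd : 1 ≤ d) (p : ℝ) (hp : 1 ≤ p) (j : ℕ)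
    (f : EuclideanSpace ℝ (Fin d) → ℂ)
    (hf : MemLp f (ENNReal.ofReal p) volume)
    (hsm : StronglyMeasurable f)
    (hpos : ∃ (k : ℤ) (m : Fin d → ℤ),
      0 < eLpNorm (truncChip d p f j k m) (ENNReal.ofReal p) volume) :
    ∃ (k' : ℤ) (m' : Fin d → ℤ), ∀ (k : ℤ) (m : Fin d → ℤ),
      eLpNorm (truncChip d p f j k m) (ENNReal.ofReal p) volume ≤
        eLpNorm (truncChip d p f j k' m') (ENNReal.ofReal p) volume := by
  have hp0 : 0 < p := by linarith
  have hq0 : ENNReal.ofReal p ≠ 0 := by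
    simp only [ne_eq, ENNReal.ofReal_eq_zero, not_le]; linarith
  have hqt : ENNReal.ofReal p ≠ ∞ := ENNReal.ofReal_ne_top
  have hqr : (ENNReal.ofReal p).toReal = p := ENNReal.toReal_ofReal hp0.le
  have hfm : Measurable f := hsm.measurable
  have habsm : Measurable fun ξ => ‖f ξ‖ :=
    continuous_norm.measurable.comp hfm
  set g : EuclideanSpace ℝ (Fin d) → ℝ≥0∞ := fun ξ => (‖f ξ‖₊ : ℝ≥0∞) ^ p with hgdef
  have hgm : Measurable g := ENNReal.continuous_rpow_const.measurable.comp hfm.enorm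
  set ν := volume.withDensity g with hνdef
  -- total mass finite
  have hTot : ν Set.univ = ∫⁻ ξ, g ξ := by
    rw [hνdef, withDensity_apply _ MeasurableSet.univ, Measure.restrict_univ]
  have hTotfin : ν Set.univ ≠ ∞ := by
    have h1 := hf.eLpNorm_ne_top
    rw [eLpNorm_eq_lintegral_rpow_enorm_toReal hq0 hqt, hqr] at h1
    rw [hTot]
    intro hcon
    rw [hgdef] at hcon
    rw [show (∫⁻ x, ‖f x‖ₑ ^ p) = ∫⁻ ξ, (fun ξ => (‖f ξ‖₊ : ℝ≥0∞) ^ p) ξ from rfl,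
      hcon, ENNReal.top_rpow_of_pos (by positivity)] at h1
    exact h1 rfl
  -- the sets
  set M : ℤ → ℝ := fun k => 2 ^ j * (2 : ℝ) ^ ((k : ℝ) * d / p) *
    (eLpNorm f (ENNReal.ofReal p) volume).toReal with hMdef
  set S : ℤ → (Fin d → ℤ) → Set (EuclideanSpace ℝ (Fin d)) :=
    fun k m => {ξ | ξ ∈ dyadicCube d k m ∧ ‖f ξ‖ < M k} with hSdef
  have hSmeas : ∀ k m, MeasurableSet (S k m) := by
    intro k m
    exact (measurableSet_dyadicCube d k m).inter
      (measurableSet_lt habsm measurable_const)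
  -- eLpNorm identity
  have hN : ∀ k m, eLpNorm (truncChip d p f j k m) (ENNReal.ofReal p) volume
      = ν (S k m) ^ (1 / p) := by
    intro k m
    rw [eLpNorm_eq_lintegral_rpow_enorm_toReal hq0 hqt, hqr]
    congr 1
    rw [hνdef, withDensity_apply _ (hSmeas k m), ← lintegral_indicator (hSmeas k m)]
    refine lintegral_congr fun ξ => ?_
    by_cases h : ξ ∈ S k m
    · rw [Set.indicator_of_mem h]
      have : truncChip d p f j k m ξ = f ξ := if_pos h
      rw [this]
      rfl
    · rw [Set.indicator_of_notMem h]
      have : truncChip d p f j k m ξ = 0 := if_neg h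
      rw [this]
      simp [ENNReal.zero_rpow_of_pos hp0]
  -- tail control
  have hTail : ∀ ε : ℝ≥0∞, 0 < ε → ∃ R : ℕ,
      ν {ξ | (R : ℝ) ≤ ‖f ξ‖} < ε := by
    intro ε hε
    set A : ℕ → Set (EuclideanSpace ℝ (Fin d)) :=
      fun n => {ξ | (n : ℝ) ≤ ‖f ξ‖} with hA
    have hAm : ∀ n, MeasurableSet (A n) :=
      fun n => measurableSet_le measurable_const habsm
    have hAanti : Antitone A := by
      intro n n' hnn' ξ hξ
      simp only [hA, Set.mem_setOf_eq] at hξ ⊢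
      exact le_trans (by exact_mod_cast hnn') hξ
    have hAint : (⋂ n, A n) = ∅ := by
      ext ξ
      simp only [Set.mem_iInter, Set.mem_empty_iff_false, iff_false, not_forall, hA,
        Set.mem_setOf_eq, not_le]
      obtain ⟨n, hn⟩ := exists_nat_gt (‖f ξ‖)
      exact ⟨n, hn⟩
    have := tendsto_measure_iInter_atTop (μ := ν) (fun n => (hAm n).nullMeasurableSet)
      hAanti ⟨0, ne_top_of_le_ne_top hTotfin (measure_mono (Set.subset_univ _))⟩
    rw [hAint, measure_empty] at this
    obtain ⟨n, hn⟩ := (this.eventually_lt_const hε).exists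
    exact ⟨n, hn⟩
  -- small-value control
  have hSmall : ∀ ε : ℝ≥0∞, 0 < ε → ∃ δ : ℝ, 0 < δ ∧
      ν {ξ | ‖f ξ‖ < δ} < ε := by
    intro ε hε
    set B : ℕ → Set (EuclideanSpace ℝ (Fin d)) :=
      fun n => {ξ | ‖f ξ‖ < 1 / (n + 1)} with hB
    have hBm : ∀ n, MeasurableSet (B n) :=
      fun n => measurableSet_lt habsm measurable_const
    have hBanti : Antitone B := by
      intro n n' hnn' ξ hξ
      simp only [hB, Set.mem_setOf_eq] at hξ ⊢
      refine lt_of_lt_of_le hξ ?_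
      apply one_div_le_one_div_of_le (by positivity)
      exact_mod_cast Nat.add_le_add_right hnn' 1
    have hBint : ν (⋂ n, B n) = 0 := by
      have hm : MeasurableSet (⋂ n, B n) := MeasurableSet.iInter hBm
      rw [hνdef, withDensity_apply _ hm, ← lintegral_indicator hm]
      have : ∀ ξ, (⋂ n, B n).indicator g ξ = 0 := by
        intro ξ
        by_cases h : ξ ∈ ⋂ n, B n
        · have hf0 : f ξ = 0 := by
            simp only [Set.mem_iInter, hB, Set.mem_setOf_eq] at h
            by_contra hne
            have habs : 0 < ‖f ξ‖ := by
              simpa [norm_pos_iff] using hne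
            obtain ⟨n, hn⟩ := exists_nat_one_div_lt habs
            exact absurd (h n) (not_lt.2 hn.le)
          rw [Set.indicator_of_mem h, hgdef]
          simp [hf0, ENNReal.zero_rpow_of_pos hp0]
        · exact Set.indicator_of_notMem h _
      simp only [this, lintegral_zero]
    have := tendsto_measure_iInter_atTop (μ := ν) (fun n => (hBm n).nullMeasurableSet)
      hBanti ⟨0, ne_top_of_le_ne_top hTotfin (measure_mono (Set.subset_univ _))⟩
    rw [hBint] at this
    obtain ⟨n, hn⟩ := (this.eventually_lt_const hε).exists
    exact ⟨1 / (n + 1), by positivity, hn⟩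
  -- fixed k: rows are finite
  have hRow : ∀ (k : ℤ) (ε : ℝ≥0∞), 0 < ε → {m : Fin d → ℤ | ε ≤ ν (S k m)}.Finite := by
    intro k ε hε
    by_contra hinf
    replace hinf : {m : Fin d → ℤ | ε ≤ ν (S k m)}.Infinite := hinf
    have hεne : ε ≠ ∞ := by
      obtain ⟨m₁, hm₁⟩ := hinf.nonempty
      exact ne_top_of_le_ne_top hTotfin
        (le_trans hm₁ (measure_mono (Set.subset_univ _)))
    obtain ⟨n, hn⟩ := ENNReal.exists_nat_gt (ENNReal.div_lt_top hTotfin hε.ne').ne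
    obtain ⟨t, hts, htcard⟩ := hinf.exists_subset_card_eq n
    have hd2 : Set.Pairwise (↑t) (Function.onFun (AEDisjoint ν) (S k)) := by
      intro m₁ _ m₂ _ hne
      have h0 : volume (S k m₁ ∩ S k m₂) = 0 :=
        measure_mono_null
          (Set.inter_subset_inter (fun ξ h => h.1) (fun ξ h => h.1))
          (volume_dyadicCube_inter d k m₁ m₂ hne)
      exact (withDensity_absolutelyContinuous volume g) h0
    have hsum : (n : ℝ≥0∞) * ε ≤ ν Set.univ := by
      calc (n : ℝ≥0∞) * ε = ∑ _m ∈ t, ε := by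
            rw [Finset.sum_const, htcard, nsmul_eq_mul]
        _ ≤ ∑ m ∈ t, ν (S k m) :=
            Finset.sum_le_sum fun m hm => hts hm
        _ = ν (⋃ m ∈ t, S k m) :=
            (measure_biUnion_finset₀ hd2
              (fun m _ => (hSmeas k m).nullMeasurableSet)).symm
        _ ≤ ν Set.univ := measure_mono (Set.subset_univ _)
    have : ν Set.univ < (n : ℝ≥0∞) * ε :=
      (ENNReal.div_lt_iff (Or.inl hε.ne') (Or.inl hεne)).1 hn
    exact absurd hsum (not_le.2 this)
  -- large k (small cubes)
  have hBigK : ∀ ε : ℝ≥0∞, 0 < ε → ε ≠ ∞ → ∃ K₁ : ℤ, ∀ k ≥ K₁, ∀ m, ν (S k m) < ε := by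
    intro ε hε hεtop
    obtain ⟨R, hR⟩ := hTail (ε / 2) (ENNReal.half_pos hε.ne')
    set c : ℝ≥0∞ := ENNReal.ofReal R ^ p with hc
    have hcne : c ≠ ∞ := ENNReal.rpow_ne_top_of_nonneg hp0.le ENNReal.ofReal_ne_top
    -- find n with c * (ofReal (2^(-n)))^d ≤ ε/2
    have htend : Tendsto (fun n : ℕ => c * ENNReal.ofReal ((2 : ℝ) ^ (-(n : ℤ)))) atTop (𝓝 0) := by
      have h1 : Tendsto (fun n : ℕ => ((2 : ℝ)⁻¹) ^ n) atTop (𝓝 0) :=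
        tendsto_pow_atTop_nhds_zero_of_lt_one (by norm_num) (by norm_num)
      have h2 : Tendsto (fun n : ℕ => ENNReal.ofReal (((2 : ℝ)⁻¹) ^ n)) atTop (𝓝 0) := by
        have := (ENNReal.continuous_ofReal.tendsto 0).comp h1
        simpa [Function.comp_def] using this
      have h3 : Tendsto (fun n : ℕ => c * ENNReal.ofReal (((2 : ℝ)⁻¹) ^ n)) atTop (𝓝 0) := by
        have := ENNReal.Tendsto.const_mul h2 (Or.inr hcne)
        simpa using this
      convert h3 using 2 with n
      rw [zpow_neg, zpow_natCast, inv_pow]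
    obtain ⟨n, hn⟩ := ((htend.eventually_lt_const (ENNReal.half_pos hε.ne')).exists)
    refine ⟨(n : ℤ), fun k hk m => ?_⟩
    -- pointwise bound
    have hpt : ∀ ξ, (S k m).indicator g ξ ≤
        (dyadicCube d k m).indicator (fun _ => c) ξ +
          ({ξ | (R : ℝ) ≤ ‖f ξ‖}).indicator g ξ := by
      intro ξ
      by_cases hξ : ξ ∈ S k m
      · rw [Set.indicator_of_mem hξ]
        by_cases hR' : (R : ℝ) ≤ ‖f ξ‖
        · exact le_add_of_nonneg_of_le zero_le
            (le_of_eq (Set.indicator_of_mem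
              (show ξ ∈ {ξ | (R : ℝ) ≤ ‖f ξ‖} from hR') g).symm)
        · push_neg at hR'
          refine le_add_of_le_of_nonneg ?_ zero_le
          rw [Set.indicator_of_mem hξ.1]
          rw [hgdef, hc]
          refine ENNReal.rpow_le_rpow ?_ hp0.le
          rw [← ENNReal.ofReal_coe_nnreal]
          apply ENNReal.ofReal_le_ofReal
          rw [coe_nnnorm]
          exact hR'.le
      · rw [Set.indicator_of_notMem hξ]
        exact zero_le
    have hbound : ν (S k m) ≤ c * volume (dyadicCube d k m) +
        ν {ξ | (R : ℝ) ≤ ‖f ξ‖} := by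
      have hAm : MeasurableSet {ξ | (R : ℝ) ≤ ‖f ξ‖} :=
        measurableSet_le measurable_const habsm
      calc ν (S k m) = ∫⁻ ξ, (S k m).indicator g ξ := by
            rw [hνdef, withDensity_apply _ (hSmeas k m), lintegral_indicator (hSmeas k m)]
        _ ≤ ∫⁻ ξ, ((dyadicCube d k m).indicator (fun _ => c) ξ +
              ({ξ | (R : ℝ) ≤ ‖f ξ‖}).indicator g ξ) := lintegral_mono hpt
        _ = (∫⁻ ξ, (dyadicCube d k m).indicator (fun _ => c) ξ) +
              ∫⁻ ξ, ({ξ | (R : ℝ) ≤ ‖f ξ‖}).indicator g ξ :=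
            lintegral_add_left ((measurable_const).indicator (measurableSet_dyadicCube d k m)) _
        _ = c * volume (dyadicCube d k m) + ν {ξ | (R : ℝ) ≤ ‖f ξ‖} := by
            rw [lintegral_indicator (measurableSet_dyadicCube d k m),
              setLIntegral_const, lintegral_indicator hAm, hνdef, withDensity_apply _ hAm]
    have hvol : c * volume (dyadicCube d k m) ≤ ε / 2 := by
      rw [volume_dyadicCube]
      have h1 : ENNReal.ofReal ((2 : ℝ) ^ (-k)) ^ d ≤ ENNReal.ofReal ((2 : ℝ) ^ (-(n : ℤ))) := by
        calc ENNReal.ofReal ((2 : ℝ) ^ (-k)) ^ d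
            ≤ ENNReal.ofReal ((2 : ℝ) ^ (-(n : ℤ))) ^ d := by
              apply pow_le_pow_left' (ENNReal.ofReal_le_ofReal _) d
              apply zpow_le_zpow_right₀ one_le_two (by omega)
          _ ≤ ENNReal.ofReal ((2 : ℝ) ^ (-(n : ℤ))) ^ 1 := by
              apply pow_le_pow_right_of_le_one' _ hd
              apply ENNReal.ofReal_le_one.2
              calc (2 : ℝ) ^ (-(n : ℤ)) ≤ (2 : ℝ) ^ (0 : ℤ) :=
                    zpow_le_zpow_right₀ one_le_two (by omega)
                _ = 1 := zpow_zero 2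
          _ = _ := pow_one _
      calc c * ENNReal.ofReal ((2 : ℝ) ^ (-k)) ^ d
          ≤ c * ENNReal.ofReal ((2 : ℝ) ^ (-(n : ℤ))) := mul_le_mul_right h1 c
        _ ≤ ε / 2 := hn.le
    have hhalf : ε / 2 ≠ ∞ := by
      intro hcon
      exact hεtop (by simpa using (ENNReal.div_eq_top.1 hcon))
    calc ν (S k m) ≤ c * volume (dyadicCube d k m) + ν {ξ | (R : ℝ) ≤ ‖f ξ‖} := hbound
      _ < ε / 2 + ε / 2 :=
          ENNReal.add_lt_add_of_le_of_lt (ne_top_of_le_ne_top hhalf hvol) hvol hR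
      _ = ε := ENNReal.add_halves ε
  -- small k (large cubes)
  have hLowK : ∀ ε : ℝ≥0∞, 0 < ε → ∃ K₂ : ℤ, ∀ k ≤ K₂, ∀ m, ν (S k m) < ε := by
    intro ε hε
    obtain ⟨δ, hδ, hνδ⟩ := hSmall ε hε
    set T : ℝ := (eLpNorm f (ENNReal.ofReal p) volume).toReal with hT
    by_cases hT0 : (2 : ℝ) ^ j * T ≤ 0
    · refine ⟨0, fun k _ m => ?_⟩
      have hSe : S k m = ∅ := by
        ext ξ
        simp only [hSdef, Set.mem_setOf_eq, Set.mem_empty_iff_false, iff_false, not_and, not_lt]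
        intro _
        have hM : M k ≤ 0 := by
          rw [hMdef]
          have h2 : (0 : ℝ) < (2 : ℝ) ^ ((k : ℝ) * d / p) := by positivity
          nlinarith [h2]
        exact le_trans hM (norm_nonneg _)
      rw [hSe]
      simpa using hε
    · push_neg at hT0
      set C : ℝ := 2 ^ j * T with hC
      set t : ℝ := Real.logb 2 (δ / C) - 1 with htdef
      have hCd : 0 < δ / C := div_pos hδ hT0
      have h2t : (2 : ℝ) ^ t < δ / C := by
        rw [htdef, Real.rpow_sub (by norm_num), Real.rpow_logb (by norm_num) (by norm_num) hCd,
          Real.rpow_one]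
        linarith [half_lt_self hCd]
      have hd0 : (0 : ℝ) < d := by exact_mod_cast hd
      obtain ⟨K₂, hK₂⟩ := exists_int_lt (t * p / d)
      refine ⟨K₂, fun k hk m => ?_⟩
      have hkd : (k : ℝ) * d / p ≤ t := by
        have hkK : (k : ℝ) ≤ (K₂ : ℝ) := by exact_mod_cast hk
        have h1 : (k : ℝ) < t * p / d := lt_of_le_of_lt hkK hK₂
        have h2 : (k : ℝ) * d < t * p := by
          have := (lt_div_iff₀ hd0).1 h1
          linarith
        rw [div_le_iff₀ hp0]
        linarith
      have hMlt : M k < δ := by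
        have h3 : (2 : ℝ) ^ ((k : ℝ) * d / p) ≤ (2 : ℝ) ^ t :=
          Real.rpow_le_rpow_of_exponent_le one_le_two hkd
        have h4 : M k = C * (2 : ℝ) ^ ((k : ℝ) * d / p) := by
          rw [hMdef, hC]; ring
        calc M k ≤ C * (2 : ℝ) ^ t := by rw [h4]; nlinarith
          _ < C * (δ / C) := by nlinarith
          _ = δ := by field_simp
      have hsub : S k m ⊆ {ξ | ‖f ξ‖ < δ} := by
        intro ξ hξ
        exact lt_trans hξ.2 hMlt
      exact lt_of_le_of_lt (measure_mono hsub) hνδ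
  -- assembly
  obtain ⟨k₀, m₀, h₀⟩ := hpos
  rw [hN] at h₀
  have hε0 : 0 < ν (S k₀ m₀) := by
    rcases eq_or_ne (ν (S k₀ m₀)) 0 with h | h
    · rw [h, ENNReal.zero_rpow_of_pos (by positivity)] at h₀
      exact absurd h₀ (lt_irrefl 0)
    · exact h.bot_lt
  set ε := ν (S k₀ m₀) with hεdef
  have hεtop : ε ≠ ∞ := ne_top_of_le_ne_top hTotfin (measure_mono (Set.subset_univ _))
  obtain ⟨K₁, hK₁⟩ := hBigK ε hε0 hεtop
  obtain ⟨K₂, hK₂⟩ := hLowK ε hε0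
  have hCfin : {km : ℤ × (Fin d → ℤ) | ε ≤ ν (S km.1 km.2)}.Finite := by
    refine Set.Finite.subset (Set.Finite.biUnion (Set.finite_Icc K₂ K₁)
      (fun k _ => ((hRow k ε hε0).image fun m => ((k, m) : ℤ × (Fin d → ℤ))))) ?_
    rintro ⟨k, m⟩ hkm
    simp only [Set.mem_setOf_eq] at hkm
    have hk1 : k ≤ K₁ := by
      by_contra h
      push_neg at h
      exact absurd hkm (not_le.2 (hK₁ k h.le m))
    have hk2 : K₂ ≤ k := by
      by_contra h
      push_neg at h
      exact absurd hkm (not_le.2 (hK₂ k h.le m))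
    exact Set.mem_biUnion (Set.mem_Icc.2 ⟨hk2, hk1⟩)
      (Set.mem_image_of_mem _ hkm)
  have hne : ((k₀, m₀) : ℤ × (Fin d → ℤ)) ∈ {km : ℤ × (Fin d → ℤ) | ε ≤ ν (S km.1 km.2)} :=
    le_refl ε
  obtain ⟨⟨k', m'⟩, hmem, hmax⟩ := Set.exists_max_image _
    (fun km : ℤ × (Fin d → ℤ) => ν (S km.1 km.2)) hCfin ⟨_, hne⟩
  refine ⟨k', m', fun k m => ?_⟩
  rw [hN, hN]
  refine ENNReal.rpow_le_rpow ?_ (by positivity)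
  by_cases h : ε ≤ ν (S k m)
  · exact hmax (k, m) h
  · push_neg at h
    exact h.le.trans (hmax (k₀, m₀) hne)


theorem trunc_chip_sup_attained
    (d : ℕ) (hd : 1 ≤ d) (p : ℝ) (hp : 1 ≤ p) (j : ℕ)
    (f : EuclideanSpace ℝ (Fin d) → ℂ)
    (hf : MemLp f (ENNReal.ofReal p) volume)
    (hpos : ∃ (k : ℤ) (m : Fin d → ℤ),
      0 < eLpNorm (truncChip d p f j k m) (ENNReal.ofReal p) volume) :
    ∃ (k' : ℤ) (m' : Fin d → ℤ), ∀ (k : ℤ) (m : Fin d → ℤ),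
      eLpNorm (truncChip d p f j k m) (ENNReal.ofReal p) volume ≤
        eLpNorm (truncChip d p f j k' m') (ENNReal.ofReal p) volume := by
  obtain ⟨f', hsm, hff'⟩ := hf.1
  have hT : eLpNorm f (ENNReal.ofReal p) volume = eLpNorm f' (ENNReal.ofReal p) volume :=
    eLpNorm_congr_ae hff'
  have hchip : ∀ (k : ℤ) (m : Fin d → ℤ),
      truncChip d p f j k m =ᵐ[volume] truncChip d p f' j k m := by
    intro k m
    filter_upwards [hff'] with ξ hξ
    simp only [truncChip]
    classical
    exact if_congr (by rw [hξ, hT]) hξ rfl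
  have key : ∀ (k : ℤ) (m : Fin d → ℤ),
      eLpNorm (truncChip d p f j k m) (ENNReal.ofReal p) volume =
        eLpNorm (truncChip d p f' j k m) (ENNReal.ofReal p) volume :=
    fun k m => eLpNorm_congr_ae (hchip k m)
  simp only [key] at hpos ⊢
  exact trunc_chip_aux d hd p hp j f' (hf.ae_eq hff') hsm hpos
end
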